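/- arXiv:2108.05338 — 2 statements merged into one kernel-verified Lean document; each statement's English description precedes it below -/
import Mathlib

section
/- For every vector y ∈ ℝ^S, (1/2) y^⊤ ( D_{f_n}(γP_π − I) + (γP_π^⊤ − I) D_{f_n} ) y ≤ ( γ^{n+1} (d_{μ,max}²/d_{μ,min}) ‖m‖₁ ‖γP_π − I‖ − λ_min ) ‖y‖², where λ_min is the smallest eigenvalue of the symmetric matrix (1/2)( D_f(I − γP_π) + (I − γP_π^⊤) D_f ). -/
open Matrix Finset

noncomputable section

/-- The truncated emphasis `m_n := Σ_{j=0}^n γ^j D_μ⁻¹ (P_π^⊤)^j D_μ i`. -/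
def truncEmph {S : Type} [Fintype S] [DecidableEq S]
    (γ : ℝ) (P : Matrix S S ℝ) (d i : S → ℝ) (n : ℕ) : S → ℝ :=
  fun s => ∑ j ∈ Finset.range (n + 1),
    γ ^ j * ((Matrix.diagonal fun s => (d s)⁻¹) * (Pᵀ) ^ j * Matrix.diagonal d).mulVec i s

/-- The emphasis `m := D_μ⁻¹ (I − γ P_π^⊤)⁻¹ D_μ i`. -/
def emph {S : Type} [Fintype S] [DecidableEq S]
    (γ : ℝ) (P : Matrix S S ℝ) (d i : S → ℝ) : S → ℝ :=
  ((Matrix.diagonal fun s => (d s)⁻¹) * (1 - γ • Pᵀ)⁻¹ * Matrix.diagonal d).mulVec i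

/-- The spectral norm (ℓ2 operator norm) of a real matrix. -/
def spec {m : Type} [Fintype m] {n : Type} [Fintype n] [DecidableEq n]
    (M : Matrix m n ℝ) : ℝ :=
  ‖LinearMap.toContinuousLinearMap (Matrix.toEuclideanLin M)‖


section AuxLemmas
variable {S : Type} [Fintype S] [DecidableEq S]


lemma stoch_pow (P : Matrix S S ℝ) (hP0 : ∀ s s', 0 ≤ P s s') (hP1 : ∀ s, ∑ s', P s s' = 1)
    (k : ℕ) : (∀ s s', 0 ≤ (P ^ k) s s') ∧ (∀ s, ∑ s', (P ^ k) s s' = 1) := by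
  induction k with
  | zero =>
    constructor
    · intro s s'
      simp [Matrix.one_apply]
      split <;> norm_num
    · intro s
      simp [Matrix.one_apply]
  | succ k ih =>
    constructor
    · intro s s'
      rw [pow_succ, Matrix.mul_apply]
      exact Finset.sum_nonneg fun t _ => mul_nonneg (ih.1 s t) (hP0 t s')
    · intro s
      rw [pow_succ]
      simp only [Matrix.mul_apply]
      rw [Finset.sum_comm]
      calc ∑ t, ∑ s', (P ^ k) s t * P t s' = ∑ t, (P ^ k) s t * ∑ s', P t s' := by
            simp [Finset.mul_sum]
        _ = 1 := by simp [hP1, ih.2 s]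

lemma stoch_pow_entry_le_one (P : Matrix S S ℝ) (hP0 : ∀ s s', 0 ≤ P s s')
    (hP1 : ∀ s, ∑ s', P s s' = 1) (k : ℕ) (s s' : S) : (P ^ k) s s' ≤ 1 := by
  have h := stoch_pow P hP0 hP1 k
  calc (P ^ k) s s' ≤ ∑ t, (P ^ k) s t :=
        Finset.single_le_sum (fun t _ => h.1 s t) (Finset.mem_univ s')
    _ = 1 := h.2 s

lemma isUnit_one_sub_smul (γ : ℝ) (hγ0 : 0 ≤ γ) (hγ1 : γ < 1)
    (P : Matrix S S ℝ) (hP0 : ∀ s s', 0 ≤ P s s') (hP1 : ∀ s, ∑ s', P s s' = 1) :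
    IsUnit (1 - γ • P) := by
  rw [Matrix.isUnit_iff_isUnit_det, isUnit_iff_ne_zero]
  intro hdet
  obtain ⟨v, hv, hveq⟩ := (Matrix.exists_mulVec_eq_zero_iff).2 hdet
  obtain ⟨s₁, hs₁⟩ := Function.ne_iff.1 hv
  have hvid : v = γ • (P *ᵥ v) := by
    have h0 := hveq
    rw [Matrix.sub_mulVec, Matrix.one_mulVec, sub_eq_zero] at h0
    exact h0.trans (Matrix.smul_mulVec γ P v)
  obtain ⟨s₀, -, hs₀⟩ := Finset.exists_max_image Finset.univ (fun s => |v s|)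
    ⟨s₁, Finset.mem_univ s₁⟩
  have hpos : 0 < |v s₀| := lt_of_lt_of_le (abs_pos.2 hs₁) (hs₀ s₁ (Finset.mem_univ s₁))
  have hlt : |v s₀| ≤ γ * |v s₀| := by
    calc |v s₀| = γ * |(P *ᵥ v) s₀| := by
          conv_lhs => rw [hvid]
          simp [abs_mul, abs_of_nonneg hγ0]
      _ ≤ γ * ∑ s', P s₀ s' * |v s₀| := by
          apply mul_le_mul_of_nonneg_left _ hγ0
          calc |(P *ᵥ v) s₀| ≤ ∑ s', |P s₀ s' * v s'| := Finset.abs_sum_le_sum_abs _ _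
            _ ≤ ∑ s', P s₀ s' * |v s₀| := by
                apply Finset.sum_le_sum
                intro s' _
                rw [abs_mul, abs_of_nonneg (hP0 s₀ s')]
                exact mul_le_mul_of_nonneg_left (hs₀ s' (Finset.mem_univ s')) (hP0 s₀ s')
      _ = γ * |v s₀| := by rw [← Finset.sum_mul, hP1, one_mul]
  nlinarith

lemma commute_inv_geom (X : Matrix S S ℝ) (h : IsUnit (1 - X)) (n : ℕ) :
    (1 - X)⁻¹ - ∑ j ∈ Finset.range (n + 1), X ^ j = X ^ (n + 1) * (1 - X)⁻¹ := by
  have hdet : IsUnit (1 - X).det := (Matrix.isUnit_iff_isUnit_det _).1 h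
  have hgeom : (1 - X) * ∑ j ∈ Finset.range (n + 1), X ^ j = 1 - X ^ (n + 1) := by
    have := mul_geom_sum X (n + 1)
    have h2 : (1 - X) * ∑ j ∈ Finset.range (n + 1), X ^ j
        = -((X - 1) * ∑ j ∈ Finset.range (n + 1), X ^ j) := by noncomm_ring
    rw [h2, this]; noncomm_ring
  have hc : X * (1 - X)⁻¹ = (1 - X)⁻¹ * X := by
    have h2 : (1 - X) * (X * (1 - X)⁻¹) = (1 - X) * ((1 - X)⁻¹ * X) := by
      rw [← Matrix.mul_assoc, ← Matrix.mul_assoc, Matrix.mul_nonsing_inv _ hdet, one_mul]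
      calc (1 - X) * X * (1 - X)⁻¹ = X * (1 - X) * (1 - X)⁻¹ := by noncomm_ring
        _ = X := by rw [Matrix.mul_assoc, Matrix.mul_nonsing_inv _ hdet, mul_one]
    have h3 := congrArg ((1 - X)⁻¹ * ·) h2
    simpa [← Matrix.mul_assoc, Matrix.nonsing_inv_mul _ hdet] using h3
  have hcomm : X ^ (n + 1) * (1 - X)⁻¹ = (1 - X)⁻¹ * X ^ (n + 1) := by
    induction (n + 1) with
    | zero => simp
    | succ k ih => rw [pow_succ, mul_assoc, hc, ← mul_assoc, ih, mul_assoc, ← pow_succ]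
  rw [hcomm]
  have : ∑ j ∈ Finset.range (n + 1), X ^ j = (1 - X)⁻¹ * (1 - X ^ (n + 1)) := by
    rw [← hgeom, ← Matrix.mul_assoc, Matrix.nonsing_inv_mul _ hdet, one_mul]
  rw [this, mul_sub, mul_one, sub_sub_cancel]

lemma spec_nonneg (M : Matrix S S ℝ) : 0 ≤ spec M := norm_nonneg _

lemma mulVec_sq_sum_le (A : Matrix S S ℝ) (y : S → ℝ) :
    ∑ s, ((A *ᵥ y) s) ^ 2 ≤ spec A ^ 2 * ∑ s, (y s) ^ 2 := by
  have h := (LinearMap.toContinuousLinearMap (Matrix.toEuclideanLin A)).le_opNorm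
    ((WithLp.equiv 2 (S → ℝ)).symm y)
  rw [LinearMap.coe_toContinuousLinearMap'] at h
  change ‖(WithLp.equiv 2 (S → ℝ)).symm (A *ᵥ y)‖ ≤ _ at h
  have hn1 : ‖(WithLp.equiv 2 (S → ℝ)).symm (A *ᵥ y)‖ = Real.sqrt (∑ s, ((A *ᵥ y) s) ^ 2) := by
    rw [EuclideanSpace.norm_eq]
    congr 1
    apply Finset.sum_congr rfl
    intro s _
    change ‖(A *ᵥ y) s‖ ^ 2 = _
    rw [Real.norm_eq_abs, sq_abs]
  have hn2 : ‖(WithLp.equiv 2 (S → ℝ)).symm y‖ = Real.sqrt (∑ s, (y s) ^ 2) := by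
    rw [EuclideanSpace.norm_eq]
    congr 1
    apply Finset.sum_congr rfl
    intro s _
    change ‖y s‖ ^ 2 = _
    rw [Real.norm_eq_abs, sq_abs]
  rw [hn1, hn2] at h
  have h1 : 0 ≤ ∑ s, ((A *ᵥ y) s) ^ 2 := Finset.sum_nonneg fun s _ => sq_nonneg _
  have h2 : 0 ≤ ∑ s, (y s) ^ 2 := Finset.sum_nonneg fun s _ => sq_nonneg _
  calc ∑ s, ((A *ᵥ y) s) ^ 2 = Real.sqrt (∑ s, ((A *ᵥ y) s) ^ 2) ^ 2 := (Real.sq_sqrt h1).symm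
    _ ≤ (spec A * Real.sqrt (∑ s, (y s) ^ 2)) ^ 2 := by
        apply pow_le_pow_left₀ (Real.sqrt_nonneg _) h
    _ = spec A ^ 2 * ∑ s, (y s) ^ 2 := by
        rw [mul_pow, Real.sq_sqrt h2]

lemma quad_err_bound (E : S → ℝ) (A : Matrix S S ℝ) (C : ℝ) (hC0 : 0 ≤ C)
    (hC : ∀ s, |E s| ≤ C) (y : S → ℝ) :
    |y ⬝ᵥ (Matrix.diagonal E * A) *ᵥ y| ≤ C * spec A * ∑ s, (y s) ^ 2 := by
  have hrw : y ⬝ᵥ (Matrix.diagonal E * A) *ᵥ y = ∑ s, (E s * y s) * (A *ᵥ y) s := by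
    rw [← Matrix.mulVec_mulVec]
    simp only [dotProduct, Matrix.mulVec_diagonal]
    apply Finset.sum_congr rfl
    intro s _
    ring
  rw [hrw]
  have hcs := Finset.sum_mul_sq_le_sq_mul_sq Finset.univ (fun s => E s * y s) (fun s => (A *ᵥ y) s)
  have h1 : ∑ s, (E s * y s) ^ 2 ≤ C ^ 2 * ∑ s, (y s) ^ 2 := by
    rw [Finset.mul_sum]
    apply Finset.sum_le_sum
    intro s _
    rw [mul_pow]
    have : E s ^ 2 ≤ C ^ 2 := by
      rw [← sq_abs (E s)]
      exact pow_le_pow_left₀ (abs_nonneg _) (hC s) 2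
    exact mul_le_mul_of_nonneg_right this (sq_nonneg _)
  have h2 := mulVec_sq_sum_le A y
  have hy2 : 0 ≤ ∑ s, (y s) ^ 2 := Finset.sum_nonneg fun s _ => sq_nonneg _
  have hsq : (∑ s, (E s * y s) * (A *ᵥ y) s) ^ 2 ≤ (C * spec A * ∑ s, (y s) ^ 2) ^ 2 := by
    calc (∑ s, (E s * y s) * (A *ᵥ y) s) ^ 2
        ≤ (∑ s, (E s * y s) ^ 2) * ∑ s, ((A *ᵥ y) s) ^ 2 := hcs
      _ ≤ (C ^ 2 * ∑ s, (y s) ^ 2) * (spec A ^ 2 * ∑ s, (y s) ^ 2) := by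
          apply mul_le_mul h1 h2 (Finset.sum_nonneg fun s _ => sq_nonneg _)
          positivity
      _ = (C * spec A * ∑ s, (y s) ^ 2) ^ 2 := by ring
  have hr0 : 0 ≤ C * spec A * ∑ s, (y s) ^ 2 := by
    have := spec_nonneg A
    positivity
  exact abs_le.2 (abs_le_of_sq_le_sq' hsq hr0)

lemma rayleigh_lower (B : Matrix S S ℝ) (hB : Bᵀ = B) (lam : ℝ)
    (hl : ∀ r : ℝ, (∃ v : S → ℝ, v ≠ 0 ∧ B *ᵥ v = r • v) → lam ≤ r) (y : S → ℝ) :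
    lam * ∑ s, (y s) ^ 2 ≤ y ⬝ᵥ B *ᵥ y := by
  have hH : B.IsHermitian := by
    rw [Matrix.IsHermitian]
    ext s t
    simp only [Matrix.conjTranspose_apply, star_trivial]
    exact congrFun (congrFun hB s) t
  set b := hH.eigenvectorBasis with hb
  set μ := hH.eigenvalues with hμ
  set L := WithLp.linearEquiv 2 ℝ (S → ℝ) with hL
  set w : S → S → ℝ := fun k => L (b k) with hw
  have heig : ∀ k, B *ᵥ w k = μ k • w k := fun k => hH.mulVec_eigenvectorBasis k
  have hlk : ∀ k, lam ≤ μ k := by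
    intro k
    apply hl (μ k)
    refine ⟨w k, ?_, heig k⟩
    intro h0
    apply b.orthonormal.ne_zero k
    have : L (b k) = L 0 := by rw [map_zero]; exact h0
    exact L.injective this
  set y' : EuclideanSpace ℝ S := L.symm y with hy'
  set c : S → ℝ := fun k => b.repr y' k with hc
  have hck : ∀ k, c k = w k ⬝ᵥ y := by
    intro k
    rw [hc]
    simp only [b.repr_apply_apply]
    rw [PiLp.inner_apply]
    simp only [RCLike.inner_apply, starRingEnd_apply, star_trivial]
    simp only [dotProduct]
    exact Finset.sum_congr rfl fun x _ => mul_comm _ _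
  have hsum : (∑ k, c k • w k) = y := by
    have h1 := b.sum_repr y'
    have h2 := congrArg L h1
    rw [map_sum] at h2
    simp only [_root_.map_smul] at h2
    rw [hy'] at h2
    simpa using h2
  have hmul : B *ᵥ y = ∑ k, (c k * μ k) • w k := by
    conv_lhs => rw [← hsum]
    have : B *ᵥ (∑ k, c k • w k) = ∑ k, B *ᵥ (c k • w k) := by
      simpa only [Matrix.mulVecLin_apply] using map_sum (Matrix.mulVecLin B) (fun k => c k • w k) Finset.univ
    rw [this]
    apply Finset.sum_congr rfl
    intro k _
    rw [Matrix.mulVec_smul, heig k, smul_smul]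
  have hds : ∀ g : S → ℝ, y ⬝ᵥ (∑ k, g k • w k) = ∑ k, g k * (y ⬝ᵥ w k) := by
    intro g
    simp only [dotProduct, Finset.sum_apply, Pi.smul_apply, smul_eq_mul,
      Finset.mul_sum]
    rw [Finset.sum_comm]
    apply Finset.sum_congr rfl
    intro k _
    apply Finset.sum_congr rfl
    intro s _
    ring
  have hdc : ∀ k, y ⬝ᵥ w k = c k := fun k => by rw [hck k, dotProduct_comm]
  have hdot : y ⬝ᵥ B *ᵥ y = ∑ k, μ k * c k ^ 2 := by
    rw [hmul, hds]
    apply Finset.sum_congr rfl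
    intro k _
    rw [hdc k]
    ring
  have hy2 : ∑ s, (y s) ^ 2 = ∑ k, c k ^ 2 := by
    have h1 : ∑ s, (y s) ^ 2 = y ⬝ᵥ y := by
      simp [dotProduct, pow_two]
    rw [h1]
    nth_rewrite 2 [← hsum]
    rw [hds]
    apply Finset.sum_congr rfl
    intro k _
    rw [hdc k]
    ring
  rw [hdot, hy2, Finset.mul_sum]
  apply Finset.sum_le_sum
  intro k _
  exact mul_le_mul_of_nonneg_right (hlk k) (sq_nonneg _)

end AuxLemmas

section Aux2
variable {S : Type} [Fintype S] [DecidableEq S]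
lemma diag_mul_inv_diag (d : S → ℝ) (hd : ∀ s, 0 < d s) :
    Matrix.diagonal d * Matrix.diagonal (fun s => (d s)⁻¹) = 1 := by
  rw [Matrix.diagonal_mul_diagonal]
  have : (fun s => d s * (d s)⁻¹) = fun _ => 1 := funext fun s => mul_inv_cancel₀ (hd s).ne'
  rw [this, Matrix.diagonal_one]

lemma emph_scaled (γ : ℝ) (P : Matrix S S ℝ) (d i : S → ℝ) (hd : ∀ s, 0 < d s) :
    (fun s => d s * emph γ P d i s) = ((1 - γ • Pᵀ)⁻¹ * Matrix.diagonal d) *ᵥ i := by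
  funext s
  have h1 : d s * emph γ P d i s
      = ((Matrix.diagonal d * ((Matrix.diagonal fun t => (d t)⁻¹) * (1 - γ • Pᵀ)⁻¹ *
          Matrix.diagonal d)) *ᵥ i) s := by
    rw [← Matrix.mulVec_mulVec, Matrix.mulVec_diagonal, emph]
  rw [h1, ← Matrix.mul_assoc, ← Matrix.mul_assoc, diag_mul_inv_diag d hd, one_mul]

lemma trunc_scaled (γ : ℝ) (P : Matrix S S ℝ) (d i : S → ℝ) (hd : ∀ s, 0 < d s) (n : ℕ)
    (hU : IsUnit (1 - γ • Pᵀ)) :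
    (fun s => d s * truncEmph γ P d i n s) =
      fun s => d s * emph γ P d i s - ((γ • Pᵀ) ^ (n + 1) *ᵥ fun t => d t * emph γ P d i t) s := by
  funext s
  rw [truncEmph, Finset.mul_sum]
  have hterm : ∀ j, d s * (γ ^ j * (((Matrix.diagonal fun t => (d t)⁻¹) * Pᵀ ^ j *
      Matrix.diagonal d) *ᵥ i) s) = (((γ • Pᵀ) ^ j * Matrix.diagonal d) *ᵥ i) s := by
    intro j
    have h1 : d s * (((Matrix.diagonal fun t => (d t)⁻¹) * Pᵀ ^ j * Matrix.diagonal d) *ᵥ i) s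
        = ((Pᵀ ^ j * Matrix.diagonal d) *ᵥ i) s := by
      have h0 : d s * (((Matrix.diagonal fun t => (d t)⁻¹) * Pᵀ ^ j * Matrix.diagonal d) *ᵥ i) s
          = ((Matrix.diagonal d * ((Matrix.diagonal fun t => (d t)⁻¹) * Pᵀ ^ j *
              Matrix.diagonal d)) *ᵥ i) s := by
        rw [eq_comm, ← Matrix.mulVec_mulVec, Matrix.mulVec_diagonal]
      rw [h0, ← Matrix.mul_assoc, ← Matrix.mul_assoc, diag_mul_inv_diag d hd, one_mul]
    rw [mul_left_comm, h1, smul_pow, Matrix.smul_mul, Matrix.smul_mulVec]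
    simp
  simp_rw [hterm]
  have hsum : ∑ j ∈ Finset.range (n + 1), (((γ • Pᵀ) ^ j * Matrix.diagonal d) *ᵥ i) s
      = (((∑ j ∈ Finset.range (n + 1), (γ • Pᵀ) ^ j) * Matrix.diagonal d) *ᵥ i) s := by
    rw [Finset.sum_mul]
    have hsmv : ∀ (f : ℕ → Matrix S S ℝ) (t : Finset ℕ), (∑ j ∈ t, f j) *ᵥ i = ∑ j ∈ t, f j *ᵥ i := by
      intro f t
      induction t using Finset.cons_induction with
      | empty => simp [Matrix.zero_mulVec]
      | cons a t ha ih => rw [Finset.sum_cons, Finset.sum_cons, Matrix.add_mulVec, ih]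
    rw [hsmv (fun j => (γ • Pᵀ) ^ j * Matrix.diagonal d) (Finset.range (n+1))]
    simp
  rw [hsum]
  have hgeo := commute_inv_geom (γ • Pᵀ) hU n
  have h2 : (∑ j ∈ Finset.range (n + 1), (γ • Pᵀ) ^ j)
      = (1 - γ • Pᵀ)⁻¹ - (γ • Pᵀ) ^ (n + 1) * (1 - γ • Pᵀ)⁻¹ := by
    rw [← hgeo]; abel
  rw [h2, Matrix.sub_mul, Matrix.sub_mulVec, emph_scaled γ P d i hd]
  have h3 : (((γ • Pᵀ) ^ (n + 1) * (1 - γ • Pᵀ)⁻¹) * Matrix.diagonal d) *ᵥ i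
      = (γ • Pᵀ) ^ (n + 1) *ᵥ (((1 - γ • Pᵀ)⁻¹ * Matrix.diagonal d) *ᵥ i) := by
    rw [Matrix.mul_assoc, ← Matrix.mulVec_mulVec]
  rw [h3, ← emph_scaled γ P d i hd]
  simp

end Aux2

/-- for every `y`,
`(1/2) yᵀ (D_{f_n}(γP−I) + (γPᵀ−I)D_{f_n}) y ≤
 (γ^{n+1} (d_max²/d_min) ‖m‖₁ ‖γP−I‖ − λ_min) ‖y‖²`,
where `λ_min` is the smallest eigenvalue of `(1/2)(D_f(I−γP) + (I−γPᵀ)D_f)`. -/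
theorem truncated_emphasis_quadratic_form_bound
    {S : Type} [Fintype S] [DecidableEq S]
    (γ : ℝ) (hγ0 : 0 ≤ γ) (hγ1 : γ < 1)
    (P : Matrix S S ℝ) (hP0 : ∀ s s', 0 ≤ P s s') (hP1 : ∀ s, ∑ s', P s s' = 1)
    (d : S → ℝ) (hd : ∀ s, 0 < d s) (hdsum : ∑ s, d s = 1)
    (i : S → ℝ) (hi : ∀ s, 0 < i s)
    (dmax dmin : ℝ)
    (hdmax : IsGreatest (Set.range d) dmax) (hdmin : IsLeast (Set.range d) dmin)
    (n : ℕ)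
    (lammin : ℝ)
    (hlam : IsLeast {r : ℝ | ∃ v : S → ℝ, v ≠ 0 ∧
        (((1 : ℝ)/2) • (Matrix.diagonal (fun s => d s * emph γ P d i s) * (1 - γ • P) +
          (1 - γ • Pᵀ) * Matrix.diagonal (fun s => d s * emph γ P d i s))).mulVec v = r • v}
      lammin) :
    ∀ y : S → ℝ,
      (1/2 : ℝ) * (∑ s, y s *
          ((Matrix.diagonal (fun s => d s * truncEmph γ P d i n s) * (γ • P - 1) +
            (γ • Pᵀ - 1) * Matrix.diagonal (fun s => d s * truncEmph γ P d i n s)).mulVec y) s) ≤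
        (γ ^ (n + 1) * (dmax ^ 2 / dmin) * (∑ s, |emph γ P d i s|) * spec (γ • P - 1)
          - lammin) * ∑ s, (y s) ^ 2 := by
  intro y
  have hU : IsUnit (1 - γ • P) := isUnit_one_sub_smul γ hγ0 hγ1 P hP0 hP1
  have hUT : IsUnit (1 - γ • Pᵀ) := by
    rw [Matrix.isUnit_iff_isUnit_det] at hU ⊢
    have ht : (1 - γ • P)ᵀ = 1 - γ • Pᵀ := by
      rw [Matrix.transpose_sub, Matrix.transpose_smul, Matrix.transpose_one]
    rw [← ht, Matrix.det_transpose]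
    exact hU
  set A : Matrix S S ℝ := γ • P - 1 with hA
  set fe : S → ℝ := fun s => d s * emph γ P d i s with hfe
  set fn : S → ℝ := fun s => d s * truncEmph γ P d i n s with hfn
  set E : S → ℝ := (γ • Pᵀ) ^ (n + 1) *ᵥ fe with hE
  set C : ℝ := γ ^ (n + 1) * (dmax ^ 2 / dmin) * (∑ s, |emph γ P d i s|) with hC
  have hAT : γ • Pᵀ - 1 = Aᵀ := by
    rw [hA, Matrix.transpose_sub, Matrix.transpose_smul, Matrix.transpose_one]
  have hfnE : fn = fun s => fe s - E s := by
    rw [hfn, hE, hfe]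
    exact trunc_scaled γ P d i hd n hUT
  have hdotT : ∀ M : Matrix S S ℝ, y ⬝ᵥ Mᵀ *ᵥ y = y ⬝ᵥ M *ᵥ y := by
    intro M
    rw [Matrix.mulVec_transpose, dotProduct_comm, ← Matrix.dotProduct_mulVec]
  -- bounds on d
  obtain ⟨s₁, hs1⟩ := hdmin.1
  obtain ⟨s₂, hs2⟩ := hdmax.1
  have hdminpos : 0 < dmin := hs1 ▸ hd s₁
  have hdmaxpos : 0 < dmax := hs2 ▸ hd s₂
  have hminmax : dmin ≤ dmax := hdmax.2 ⟨s₁, hs1⟩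
  have habs : 0 ≤ ∑ s, |emph γ P d i s| := Finset.sum_nonneg fun s _ => abs_nonneg _
  have hmaxled : dmax ≤ dmax ^ 2 / dmin := by
    rw [le_div_iff₀ hdminpos]
    nlinarith
  -- bound on E
  have hEb : ∀ s, |E s| ≤ C := by
    intro s
    have hpow : (γ • Pᵀ) ^ (n + 1) = γ ^ (n + 1) • (P ^ (n + 1))ᵀ := by
      rw [smul_pow, Matrix.transpose_pow]
    have hEs : E s = γ ^ (n + 1) * ∑ s', (P ^ (n + 1)) s' s * fe s' := by
      rw [hE, hpow, Matrix.smul_mulVec, Pi.smul_apply, smul_eq_mul]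
      simp [Matrix.mulVec, dotProduct, Matrix.transpose_apply]
    rw [hEs, abs_mul, abs_of_nonneg (pow_nonneg hγ0 _)]
    have h1 : |∑ s', (P ^ (n + 1)) s' s * fe s'| ≤ dmax * ∑ s', |emph γ P d i s'| := by
      calc |∑ s', (P ^ (n + 1)) s' s * fe s'| ≤ ∑ s', |(P ^ (n + 1)) s' s * fe s'| :=
            Finset.abs_sum_le_sum_abs _ _
        _ ≤ ∑ s', dmax * |emph γ P d i s'| := by
            apply Finset.sum_le_sum
            intro s' _
            rw [abs_mul, abs_of_nonneg ((stoch_pow P hP0 hP1 (n + 1)).1 s' s)]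
            have h2 : |fe s'| ≤ dmax * |emph γ P d i s'| := by
              rw [hfe, abs_mul, abs_of_nonneg (hd s').le]
              exact mul_le_mul_of_nonneg_right (hdmax.2 ⟨s', rfl⟩) (abs_nonneg _)
            calc (P ^ (n + 1)) s' s * |fe s'| ≤ 1 * |fe s'| := by
                  exact mul_le_mul_of_nonneg_right
                    (stoch_pow_entry_le_one P hP0 hP1 (n + 1) s' s) (abs_nonneg _)
              _ = |fe s'| := one_mul _
              _ ≤ dmax * |emph γ P d i s'| := h2
        _ = dmax * ∑ s', |emph γ P d i s'| := by rw [Finset.mul_sum]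
    calc γ ^ (n + 1) * |∑ s', (P ^ (n + 1)) s' s * fe s'|
        ≤ γ ^ (n + 1) * (dmax * ∑ s', |emph γ P d i s'|) :=
          mul_le_mul_of_nonneg_left h1 (pow_nonneg hγ0 _)
      _ ≤ C := by
          rw [hC]
          have := mul_le_mul_of_nonneg_right hmaxled habs
          calc γ ^ (n + 1) * (dmax * ∑ s', |emph γ P d i s'|)
              ≤ γ ^ (n + 1) * (dmax ^ 2 / dmin * ∑ s', |emph γ P d i s'|) :=
                mul_le_mul_of_nonneg_left this (pow_nonneg hγ0 _)
            _ = γ ^ (n + 1) * (dmax ^ 2 / dmin) * ∑ s', |emph γ P d i s'| := by ring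
  have hC0 : 0 ≤ C := by
    rw [hC]
    apply mul_nonneg (mul_nonneg (pow_nonneg hγ0 _) _) habs
    exact div_nonneg (sq_nonneg _) hdminpos.le
  -- LHS as dot product
  have hdot0 : (∑ s, y s * ((Matrix.diagonal fn * A + Aᵀ * Matrix.diagonal fn) *ᵥ y) s)
      = y ⬝ᵥ ((Matrix.diagonal fn * A + Aᵀ * Matrix.diagonal fn) *ᵥ y) := rfl
  have key : (1/2 : ℝ) * (y ⬝ᵥ ((Matrix.diagonal fn * A + Aᵀ * Matrix.diagonal fn) *ᵥ y))
      = y ⬝ᵥ ((Matrix.diagonal fn * A) *ᵥ y) := by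
    rw [Matrix.add_mulVec, dotProduct_add]
    have h2 : y ⬝ᵥ (Aᵀ * Matrix.diagonal fn) *ᵥ y = y ⬝ᵥ (Matrix.diagonal fn * A) *ᵥ y := by
      have h3 : Aᵀ * Matrix.diagonal fn = (Matrix.diagonal fn * A)ᵀ := by
        rw [Matrix.transpose_mul, Matrix.diagonal_transpose]
      rw [h3, hdotT]
    rw [h2]
    ring
  -- split into Df and De parts
  have hDn : Matrix.diagonal fn = Matrix.diagonal fe - Matrix.diagonal E := by
    have h4 : fn = fe - E := hfnE
    rw [h4, Matrix.diagonal_sub]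
    rfl
  have hsplit : y ⬝ᵥ ((Matrix.diagonal fn * A) *ᵥ y)
      = y ⬝ᵥ ((Matrix.diagonal fe * A) *ᵥ y) - y ⬝ᵥ ((Matrix.diagonal E * A) *ᵥ y) := by
    rw [hDn, Matrix.sub_mul, Matrix.sub_mulVec, dotProduct_sub]
  -- Rayleigh part
  set B : Matrix S S ℝ := ((1 : ℝ)/2) • (Matrix.diagonal fe * (1 - γ • P) +
      (1 - γ • Pᵀ) * Matrix.diagonal fe) with hB
  have hBsym : Bᵀ = B := by
    rw [hB]
    simp only [Matrix.transpose_smul, Matrix.transpose_add, Matrix.transpose_mul,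
      Matrix.transpose_sub, Matrix.transpose_one, Matrix.diagonal_transpose,
      Matrix.transpose_transpose]
    rw [add_comm]
  have hray := rayleigh_lower B hBsym lammin (fun r hr => hlam.2 hr) y
  have hBoth : y ⬝ᵥ B *ᵥ y = -(y ⬝ᵥ (Matrix.diagonal fe * A) *ᵥ y) := by
    have h1 : (1 : Matrix S S ℝ) - γ • P = -A := by rw [hA, neg_sub]
    have h1' : (1 : Matrix S S ℝ) - γ • Pᵀ = -Aᵀ := by rw [← hAT, neg_sub]
    rw [hB, h1, h1', Matrix.mul_neg, Matrix.neg_mul]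
    rw [Matrix.smul_mulVec, dotProduct_smul]
    rw [Matrix.add_mulVec, dotProduct_add, Matrix.neg_mulVec, Matrix.neg_mulVec,
      dotProduct_neg, dotProduct_neg]
    have h3 : Aᵀ * Matrix.diagonal fe = (Matrix.diagonal fe * A)ᵀ := by
      rw [Matrix.transpose_mul, Matrix.diagonal_transpose]
    rw [h3, hdotT]
    rw [smul_eq_mul]
    ring
  have hpart1 : y ⬝ᵥ ((Matrix.diagonal fe * A) *ᵥ y) ≤ -(lammin * ∑ s, (y s) ^ 2) := by
    rw [hBoth] at hray
    linarith
  -- error part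
  have herr := quad_err_bound E A C hC0 hEb y
  have hpart2 : -(C * spec A * ∑ s, (y s) ^ 2) ≤ y ⬝ᵥ ((Matrix.diagonal E * A) *ᵥ y) :=
    (abs_le.1 herr).1
  -- conclude
  rw [hAT, hdot0, key, hsplit]
  have hrhs : (C * spec A - lammin) * ∑ s, (y s) ^ 2
      = C * spec A * (∑ s, (y s) ^ 2) - lammin * ∑ s, (y s) ^ 2 := by ring
  linarith [hrhs, hpart1, hpart2]

end
end

section
/- If γ^{n+1} < κ d_{μ,min} min_s( i(s) d_μ(s) ) / ( d_{μ,max}² ‖I − γP_π^⊤‖_∞ ‖m‖₁ ), where κ := min_s d_μ(s) i(s) / f(s), and the feature matrix X has full column rank, then the projected Bellman operator Π_{f_n} T_π is a √γ-contraction in the norm ‖·‖_{f_n}: for all v₁, v₂ ∈ ℝ^S, ‖Π_{f_n} T_π v₁ − Π_{f_n} T_π v₂‖_{f_n} ≤ √γ ‖v₁ − v₂‖_{f_n}. -/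
open Matrix Finset

noncomputable section


private lemma quad_zero' {b c : ℝ} (hb : 0 ≤ b)
    (h : ∀ t : ℝ, 0 ≤ 2 * t * c + t ^ 2 * b) : c = 0 := by
  by_contra hc
  have hb1 : (0:ℝ) < b + 1 := by linarith
  set u := c / (b + 1) with hu
  have hcu : c = u * (b + 1) := by rw [hu, div_mul_cancel₀ c hb1.ne']
  have hu0 : u ≠ 0 := by
    intro h0; rw [h0, zero_mul] at hcu; exact hc hcu
  have h1 := h (-u)
  rw [hcu] at h1
  have h2 : 0 < u ^ 2 := by positivity
  nlinarith [h1, h2, hb]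

private lemma pow_entry_nonneg' {S : Type} [Fintype S] [DecidableEq S]
    {P : Matrix S S ℝ} (hP0 : ∀ s s', 0 ≤ P s s') :
    ∀ (j : ℕ) (s t : S), 0 ≤ (P ^ j) s t := by
  intro j
  induction j with
  | zero => intro s t; simp only [pow_zero, Matrix.one_apply]; split <;> norm_num
  | succ j ih =>
    intro s t
    rw [pow_succ, Matrix.mul_apply]
    exact Finset.sum_nonneg fun k _ => mul_nonneg (ih s k) (hP0 k t)

private lemma pow_rowsum' {S : Type} [Fintype S] [DecidableEq S]
    {P : Matrix S S ℝ} (hP1 : ∀ s, ∑ s', P s s' = 1) :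
    ∀ (j : ℕ) (s : S), ∑ t, (P ^ j) s t = 1 := by
  intro j
  induction j with
  | zero => intro s; simp [Matrix.one_apply]
  | succ j ih =>
    intro s
    simp only [pow_succ, Matrix.mul_apply]
    rw [Finset.sum_comm]
    calc ∑ k, ∑ t, (P ^ j) s k * P k t = ∑ k, (P ^ j) s k * ∑ t, P k t := by
          simp [Finset.mul_sum]
      _ = 1 := by simp [hP1, ih]

private lemma pow_entry_le_one' {S : Type} [Fintype S] [DecidableEq S]
    {P : Matrix S S ℝ} (hP0 : ∀ s s', 0 ≤ P s s') (hP1 : ∀ s, ∑ s', P s s' = 1)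
    (j : ℕ) (s t : S) : (P ^ j) s t ≤ 1 := by
  calc (P ^ j) s t ≤ ∑ t', (P ^ j) s t' :=
        Finset.single_le_sum (fun t' _ => pow_entry_nonneg' hP0 j s t') (Finset.mem_univ t)
    _ = 1 := pow_rowsum' hP1 j s

private lemma diag_mulVec' {S : Type} [Fintype S] [DecidableEq S] (e v : S → ℝ) :
    (Matrix.diagonal e).mulVec v = fun s => e s * v s := by
  funext s; simp [Matrix.mulVec, dotProduct, Matrix.diagonal]

private lemma inv_entry_ge_one' {S : Type} [Fintype S] [DecidableEq S]
    {γ : ℝ} (hγ0 : 0 ≤ γ) (hγ1 : γ < 1)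
    {P : Matrix S S ℝ} (hP0 : ∀ s s', 0 ≤ P s s') (hP1 : ∀ s, ∑ s', P s s' = 1) :
    (1 - γ • Pᵀ).det ≠ 0 ∧ ∀ s t, (1 : Matrix S S ℝ) s t ≤ (1 - γ • Pᵀ)⁻¹ s t := by
  have hdet : (1 - γ • P).det ≠ 0 := by
    intro h0
    obtain ⟨v, hv0, hv⟩ := Matrix.exists_mulVec_eq_zero_iff.mpr h0
    obtain ⟨sw, hsw⟩ := Function.ne_iff.mp hv0
    obtain ⟨s₀, -, hs₀⟩ := Finset.exists_max_image Finset.univ (fun s => |v s|)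
      ⟨sw, Finset.mem_univ sw⟩
    have hvs : ∀ s, v s = γ * (P.mulVec v) s := by
      intro s
      have h := congrFun hv s
      have h2 : ((1 - γ • P).mulVec v) s = v s - γ * (P.mulVec v) s := by
        simp [Matrix.sub_mulVec, Matrix.smul_mulVec, Matrix.one_mulVec]
      rw [h2] at h
      simp only [Pi.zero_apply] at h
      linarith [h]
    have hb : |v s₀| ≤ γ * |v s₀| := by
      calc |v s₀| = γ * |(P.mulVec v) s₀| := by rw [hvs s₀, abs_mul, abs_of_nonneg hγ0]
        _ ≤ γ * ∑ s', P s₀ s' * |v s'| := by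
            apply mul_le_mul_of_nonneg_left _ hγ0
            calc |(P.mulVec v) s₀| ≤ ∑ s', |P s₀ s' * v s'| :=
                  Finset.abs_sum_le_sum_abs _ _
              _ = ∑ s', P s₀ s' * |v s'| := Finset.sum_congr rfl fun s' _ => by
                  rw [abs_mul, abs_of_nonneg (hP0 s₀ s')]
        _ ≤ γ * ∑ s', P s₀ s' * |v s₀| := by
            apply mul_le_mul_of_nonneg_left _ hγ0
            exact Finset.sum_le_sum fun s' _ =>
              mul_le_mul_of_nonneg_left (hs₀ s' (Finset.mem_univ s')) (hP0 s₀ s')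
        _ = γ * |v s₀| := by rw [← Finset.sum_mul, hP1 s₀, one_mul]
    have hz : |v s₀| = 0 := by nlinarith [abs_nonneg (v s₀)]
    have : |v sw| ≤ 0 := hz ▸ hs₀ sw (Finset.mem_univ sw)
    exact hsw (abs_nonpos_iff.mp (by simpa using this))
  have hdetA : (1 - γ • Pᵀ).det ≠ 0 := by
    have hT : (1 - γ • Pᵀ) = (1 - γ • P)ᵀ := by
      rw [Matrix.transpose_sub, Matrix.transpose_smul, Matrix.transpose_one]
    rw [hT, Matrix.det_transpose]; exact hdet
  refine ⟨hdetA, ?_⟩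
  set Q := γ • Pᵀ with hQ
  set B := (1 - Q)⁻¹ with hB
  have hAB : (1 - Q) * B = 1 := Matrix.mul_nonsing_inv _ (isUnit_iff_ne_zero.mpr hdetA)
  have hB1 : B = 1 + Q * B := by
    have h := hAB
    rw [sub_mul, one_mul, sub_eq_iff_eq_add] at h
    exact h
  have hQpow : ∀ (N : ℕ) (s t : S), (Q ^ N) s t = γ ^ N * (P ^ N) t s := by
    intro N s t
    calc (Q ^ N) s t = (γ ^ N • Pᵀ ^ N) s t := by rw [hQ, smul_pow]
      _ = γ ^ N * (Pᵀ ^ N) s t := by rw [Matrix.smul_apply, smul_eq_mul]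
      _ = γ ^ N * (P ^ N) t s := by rw [← Matrix.transpose_pow, Matrix.transpose_apply]
  have hBiter : ∀ N, B = (∑ j ∈ Finset.range N, Q ^ j) + Q ^ N * B := by
    intro N; induction N with
    | zero => simp
    | succ N ih =>
      rw [Finset.sum_range_succ]
      calc B = (∑ j ∈ Finset.range N, Q ^ j) + Q ^ N * B := ih
        _ = (∑ j ∈ Finset.range N, Q ^ j) + Q ^ N * (1 + Q * B) := by rw [← hB1]
        _ = ((∑ j ∈ Finset.range N, Q ^ j) + Q ^ N) + Q ^ (N + 1) * B := by
            rw [mul_add, mul_one, ← mul_assoc, ← pow_succ, add_assoc]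
  set C : ℝ := ∑ p, ∑ q, |B p q| with hC
  have hCb : ∀ t, ∑ k, |B k t| ≤ C := by
    intro t
    apply Finset.sum_le_sum
    intro p _
    exact Finset.single_le_sum (f := fun q => |B p q|) (fun q _ => abs_nonneg _) (Finset.mem_univ t)
  have hQB : ∀ (N : ℕ) (s t : S), |(Q ^ N * B) s t| ≤ γ ^ N * C := by
    intro N s t
    rw [Matrix.mul_apply]
    calc |∑ k, (Q ^ N) s k * B k t| ≤ ∑ k, |(Q ^ N) s k * B k t| :=
          Finset.abs_sum_le_sum_abs _ _
      _ ≤ ∑ k, γ ^ N * |B k t| := by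
          apply Finset.sum_le_sum; intro k _
          rw [abs_mul]
          apply mul_le_mul_of_nonneg_right _ (abs_nonneg _)
          rw [hQpow, abs_of_nonneg (mul_nonneg (pow_nonneg hγ0 N) (pow_entry_nonneg' hP0 N k s))]
          calc γ ^ N * (P ^ N) k s ≤ γ ^ N * 1 :=
                mul_le_mul_of_nonneg_left (pow_entry_le_one' hP0 hP1 N k s) (pow_nonneg hγ0 N)
            _ = γ ^ N := mul_one _
      _ = γ ^ N * ∑ k, |B k t| := by rw [Finset.mul_sum]
      _ ≤ γ ^ N * C := mul_le_mul_of_nonneg_left (hCb t) (pow_nonneg hγ0 N)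
  intro s t
  have hev : ∀ N : ℕ, (1 : Matrix S S ℝ) s t - γ ^ (N + 1) * C ≤ B s t := by
    intro N
    have h2 : B s t = (∑ j ∈ Finset.range (N + 1), (Q ^ j) s t) + (Q ^ (N + 1) * B) s t := by
      conv_lhs => rw [hBiter (N + 1)]
      simp [Matrix.add_apply, Matrix.sum_apply]
    have h3 : (1 : Matrix S S ℝ) s t ≤ ∑ j ∈ Finset.range (N + 1), (Q ^ j) s t := by
      have h0 : (Q ^ 0) s t = (1 : Matrix S S ℝ) s t := by rw [pow_zero]
      calc (1 : Matrix S S ℝ) s t = (Q ^ 0) s t := h0.symm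
        _ ≤ ∑ j ∈ Finset.range (N + 1), (Q ^ j) s t :=
            Finset.single_le_sum (f := fun j => (Q ^ j) s t)
              (fun j _ => by
                show 0 ≤ (Q ^ j) s t
                rw [hQpow]
                exact mul_nonneg (pow_nonneg hγ0 j) (pow_entry_nonneg' hP0 j t s))
              (Finset.mem_range.mpr (Nat.succ_pos N))
    have h4 := neg_abs_le ((Q ^ (N + 1) * B) s t)
    have h5 := hQB (N + 1) s t
    linarith
  have hlim : Filter.Tendsto (fun N : ℕ => (1 : Matrix S S ℝ) s t - γ ^ (N + 1) * C)
      Filter.atTop (nhds ((1 : Matrix S S ℝ) s t - 0 * C)) := by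
    apply Filter.Tendsto.const_sub
    apply Filter.Tendsto.mul_const
    exact (tendsto_pow_atTop_nhds_zero_of_lt_one hγ0 hγ1).comp (Filter.tendsto_add_atTop_nat 1)
  rw [zero_mul, sub_zero] at hlim
  exact le_of_tendsto hlim (Filter.Eventually.of_forall hev)


set_option maxHeartbeats 1600000 in
/-- under the truncation-length condition of Lemma 6 and full column rank
of `X`, the projected Bellman operator `Π_{f_n} T_π` is a `√γ`-contraction in `‖·‖_{f_n}`.
The projection `Proj` is characterized as the `‖·‖_{f_n}`-closest point in the column
space of `X`. -/
theorem projected_bellman_contraction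
    {S : Type} [Fintype S] [DecidableEq S] {K : ℕ}
    (γ : ℝ) (hγ0 : 0 ≤ γ) (hγ1 : γ < 1)
    (P : Matrix S S ℝ) (hP0 : ∀ s s', 0 ≤ P s s') (hP1 : ∀ s, ∑ s', P s s' = 1)
    (d : S → ℝ) (hd : ∀ s, 0 < d s) (hdsum : ∑ s, d s = 1)
    (i : S → ℝ) (hi : ∀ s, 0 < i s)
    (dmax dmin : ℝ)
    (hdmax : IsGreatest (Set.range d) dmax) (hdmin : IsLeast (Set.range d) dmin)
    (κ : ℝ)
    (hκ : IsLeast (Set.range fun s => d s * i s / (d s * emph γ P d i s)) κ)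
    (idmin : ℝ)
    (hidmin : IsLeast (Set.range fun s => i s * d s) idmin)
    (ninf : ℝ)
    (hninf : IsGreatest (Set.range fun s => ∑ s', |(1 - γ • Pᵀ) s s'|) ninf)
    (n : ℕ)
    (hn : γ ^ (n + 1) < κ * dmin * idmin / (dmax ^ 2 * ninf * ∑ s, |emph γ P d i s|))
    (X : Matrix S (Fin K) ℝ) (hX : Function.Injective X.mulVec)
    (rπ : S → ℝ)
    (Proj : (S → ℝ) → (S → ℝ))
    (hProj : ∀ v : S → ℝ,
      (∃ w : Fin K → ℝ, Proj v = X.mulVec w) ∧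
      ∀ w : Fin K → ℝ,
        ∑ s, (d s * truncEmph γ P d i n s) * (Proj v s - v s) ^ 2 ≤
          ∑ s, (d s * truncEmph γ P d i n s) * (X.mulVec w s - v s) ^ 2) :
    ∀ v₁ v₂ : S → ℝ,
      Real.sqrt (∑ s, (d s * truncEmph γ P d i n s) *
          (Proj (fun s => rπ s + γ * P.mulVec v₁ s) s -
           Proj (fun s => rπ s + γ * P.mulVec v₂ s) s) ^ 2) ≤
        Real.sqrt γ *
          Real.sqrt (∑ s, (d s * truncEmph γ P d i n s) * (v₁ s - v₂ s) ^ 2) := by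
  classical
  -- basic positivity facts
  obtain ⟨sd, hsd⟩ := hdmax.1
  have hS : Nonempty S := ⟨sd⟩
  have hdmax0 : 0 < dmax := hsd ▸ hd sd
  have hdled : ∀ s, d s ≤ dmax := fun s => hdmax.2 ⟨s, rfl⟩
  have hdmind : ∀ s, dmin ≤ d s := fun s => hdmin.2 ⟨s, rfl⟩
  obtain ⟨sm, hsm⟩ := hdmin.1
  have hdmin0 : 0 < dmin := hsm ▸ hd sm
  obtain ⟨si, hsi⟩ := hidmin.1
  have hidmin0 : 0 < idmin := hsi ▸ mul_pos (hi si) (hd si)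
  have hidminle : ∀ s, idmin ≤ i s * d s := fun s => hidmin.2 ⟨s, rfl⟩
  have hγ1' : (0:ℝ) < 1 - γ := by linarith
  have hdne : ∀ s, d s ≠ 0 := fun s => (hd s).ne'
  have hdi0 : ∀ s, 0 < d s * i s := fun s => mul_pos (hd s) (hi s)
  -- ==================== emph analysis ====================
  obtain ⟨hdetA, hBge⟩ := inv_entry_ge_one' hγ0 hγ1 hP0 hP1
  set B : Matrix S S ℝ := (1 - γ • Pᵀ)⁻¹ with hBdef
  set F : S → ℝ := B.mulVec (fun t => d t * i t) with hFdef
  have hFs : ∀ s, F s = ∑ t, B s t * (d t * i t) := fun s => rfl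
  have hemph : ∀ s, emph γ P d i s = (d s)⁻¹ * F s := by
    intro s
    unfold emph
    rw [← Matrix.mulVec_mulVec, ← Matrix.mulVec_mulVec, diag_mulVec' d i, ← hBdef,
      diag_mulVec' (fun s => (d s)⁻¹)]
  have hFge : ∀ s, d s * i s ≤ F s := by
    intro s
    calc d s * i s = ∑ t, (1 : Matrix S S ℝ) s t * (d t * i t) := by
          simp [Matrix.one_apply]
      _ ≤ ∑ t, B s t * (d t * i t) :=
          Finset.sum_le_sum fun t _ =>
            mul_le_mul_of_nonneg_right (hBge s t) (hdi0 t).le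
      _ = F s := (hFs s).symm
  have hF0 : ∀ s, 0 < F s := fun s => lt_of_lt_of_le (hdi0 s) (hFge s)
  have hABm : (1 - γ • Pᵀ) * B = 1 :=
    Matrix.mul_nonsing_inv _ (isUnit_iff_ne_zero.mpr hdetA)
  have hAF : ∀ s, F s = d s * i s + γ * ∑ s', P s' s * F s' := by
    have h1 : (1 - γ • Pᵀ).mulVec F = fun t => d t * i t := by
      rw [hFdef, Matrix.mulVec_mulVec, hABm, Matrix.one_mulVec]
    intro s
    have h2 := congrFun h1 s
    have h3 : ((1 - γ • Pᵀ).mulVec F) s = F s - γ * (Pᵀ.mulVec F) s := by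
      simp [Matrix.sub_mulVec, Matrix.smul_mulVec, Matrix.one_mulVec]
    have h4 : (Pᵀ.mulVec F) s = ∑ s', P s' s * F s' := by
      simp [Matrix.mulVec, dotProduct, Matrix.transpose_apply]
    rw [h3, h4] at h2
    linarith
  have hFsum : (1 - γ) * (∑ s, F s) = ∑ s, d s * i s := by
    have e : ∑ s, F s = (∑ s, d s * i s) + γ * ∑ s', F s' := by
      calc ∑ s, F s = ∑ s, (d s * i s + γ * ∑ s', P s' s * F s') :=
            Finset.sum_congr rfl fun s _ => hAF s
        _ = (∑ s, d s * i s) + ∑ s, γ * ∑ s', P s' s * F s' := Finset.sum_add_distrib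
        _ = (∑ s, d s * i s) + γ * ∑ s', F s' := by
            congr 1
            rw [← Finset.mul_sum]
            congr 1
            rw [Finset.sum_comm]
            calc ∑ s', ∑ s, P s' s * F s' = ∑ s', (∑ s, P s' s) * F s' :=
                  Finset.sum_congr rfl fun s' _ => (Finset.sum_mul _ _ _).symm
              _ = ∑ s', F s' := by simp [hP1]
    ring_nf
    ring_nf at e
    linarith
  have hSdi0 : 0 < ∑ s, d s * i s :=
    Finset.sum_pos (fun s _ => hdi0 s) Finset.univ_nonempty
  have hSF0 : 0 < ∑ s, F s := Finset.sum_pos (fun s _ => hF0 s) Finset.univ_nonempty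
  have hemphpos : ∀ s, 0 < emph γ P d i s := by
    intro s; rw [hemph s]; exact mul_pos (inv_pos.mpr (hd s)) (hF0 s)
  have hdemph : ∀ s, d s * emph γ P d i s = F s := by
    intro s; rw [hemph s, ← mul_assoc, mul_inv_cancel₀ (hdne s), one_mul]
  have hSm0 : 0 < ∑ s, |emph γ P d i s| :=
    Finset.sum_pos (fun s _ => abs_pos.mpr (hemphpos s).ne') Finset.univ_nonempty
  have hSm : ∑ s, F s ≤ dmax * ∑ s, |emph γ P d i s| := by
    have h1 : ∀ s, F s / dmax ≤ |emph γ P d i s| := by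
      intro s
      rw [abs_of_pos (hemphpos s), hemph s]
      calc F s / dmax ≤ F s / d s :=
            div_le_div_of_nonneg_left (hF0 s).le (hd s) (hdled s)
        _ = (d s)⁻¹ * F s := by rw [div_eq_mul_inv, mul_comm]
    calc ∑ s, F s = dmax * ∑ s, F s / dmax := by
          rw [Finset.mul_sum]
          exact Finset.sum_congr rfl fun s _ => by field_simp
      _ ≤ dmax * ∑ s, |emph γ P d i s| :=
          mul_le_mul_of_nonneg_left (Finset.sum_le_sum fun s _ => h1 s) hdmax0.le
  have hκ1 : κ ≤ 1 := by
    have h : κ ≤ d sd * i sd / (d sd * emph γ P d i sd) := hκ.2 ⟨sd, rfl⟩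
    rw [hdemph sd] at h
    calc κ ≤ d sd * i sd / F sd := h
      _ ≤ 1 := div_le_one_of_le₀ (hFge sd) (hF0 sd).le
  have hκ0 : 0 < κ := by
    obtain ⟨sk, hk0⟩ := hκ.1
    have hk : d sk * i sk / (d sk * emph γ P d i sk) = κ := hk0
    rw [hdemph sk] at hk
    rw [← hk]
    exact div_pos (hdi0 sk) (hF0 sk)
  have hninfge : 1 - γ ≤ ninf := by
    have h := hninf.2 ⟨sd, rfl⟩
    have hPle : P sd sd ≤ 1 := by
      calc P sd sd ≤ ∑ s', P sd s' :=
            Finset.single_le_sum (f := fun s' => P sd s')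
              (fun s' _ => hP0 sd s') (Finset.mem_univ sd)
        _ = 1 := hP1 sd
    have hdiag : (1 - γ • Pᵀ) sd sd = 1 - γ * P sd sd := by
      simp [Matrix.sub_apply, Matrix.one_apply, Matrix.smul_apply,
        Matrix.transpose_apply, smul_eq_mul]
    calc 1 - γ ≤ 1 - γ * P sd sd := by nlinarith
      _ = |(1 - γ • Pᵀ) sd sd| := by
          rw [hdiag, abs_of_nonneg (by nlinarith)]
      _ ≤ ∑ s', |(1 - γ • Pᵀ) sd s'| :=
          Finset.single_le_sum (f := fun s' => |(1 - γ • Pᵀ) sd s'|)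
            (fun s' _ => abs_nonneg _) (Finset.mem_univ sd)
      _ ≤ ninf := h
  have hninf0 : 0 < ninf := lt_of_lt_of_le hγ1' hninfge
  -- the key scalar inequality
  have hstar : γ ^ (n + 1) * (∑ s, d s * i s) < idmin := by
    have hcmp : κ * dmin * idmin / (dmax ^ 2 * ninf * ∑ s, |emph γ P d i s|)
        ≤ idmin / (∑ s, d s * i s) := by
      rw [div_le_div_iff₀ (by positivity) hSdi0]
      have key : κ * dmin * (∑ s, d s * i s) ≤ dmax ^ 2 * ninf * ∑ s, |emph γ P d i s| := by
        have h1 : κ * dmin * (∑ s, d s * i s) ≤ dmax * (∑ s, d s * i s) := by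
          have hdd : dmin ≤ dmax := hsd ▸ hdmind sd
          nlinarith [mul_nonneg (sub_nonneg.mpr hκ1) (mul_pos hdmin0 hSdi0).le,
            mul_nonneg (sub_nonneg.mpr hdd) hSdi0.le]
        have h2 : dmax * (∑ s, d s * i s) = dmax * ((1 - γ) * ∑ s, F s) := by
          rw [hFsum]
        have h3 : dmax * ((1 - γ) * ∑ s, F s) ≤ dmax ^ 2 * ninf * ∑ s, |emph γ P d i s| := by
          nlinarith [mul_pos hdmax0 hγ1', hSm, hninfge, hSm0, hdmax0,
            mul_pos (mul_pos hdmax0 hdmax0) hSm0]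
        linarith
      nlinarith [key, hidmin0, hSdi0]
    have := lt_of_lt_of_le hn hcmp
    exact (lt_div_iff₀ hSdi0).mp this
  -- ==================== the weight vector W ====================
  set G : ℕ → S → ℝ := fun j s => ∑ s', (P ^ j) s' s * (d s' * i s') with hGdef
  have hGs : ∀ j s, G j s = ∑ s', (P ^ j) s' s * (d s' * i s') := fun j s => rfl
  have hG0 : ∀ j s, 0 ≤ G j s := fun j s =>
    Finset.sum_nonneg fun s' _ => mul_nonneg (pow_entry_nonneg' hP0 j s' s) (hdi0 s').le
  have hG0eq : ∀ s, G 0 s = d s * i s := by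
    intro s
    rw [hGs]
    simp [Matrix.one_apply]
  have hGle : ∀ j s, G j s ≤ ∑ s', d s' * i s' := by
    intro j s
    apply Finset.sum_le_sum
    intro s' _
    calc (P ^ j) s' s * (d s' * i s') ≤ 1 * (d s' * i s') :=
          mul_le_mul_of_nonneg_right (pow_entry_le_one' hP0 hP1 j s' s) (hdi0 s').le
      _ = d s' * i s' := one_mul _
  have hGsucc : ∀ j s, G (j + 1) s = ∑ s', P s' s * G j s' := by
    intro j s
    simp only [hGs, pow_succ, Matrix.mul_apply, Finset.sum_mul, Finset.mul_sum]
    rw [Finset.sum_comm]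
    exact Finset.sum_congr rfl fun s' _ => Finset.sum_congr rfl fun t _ => by ring
  set W : S → ℝ := fun s => ∑ j ∈ Finset.range (n + 1), γ ^ j * G j s with hWdef
  have hWs : ∀ s, W s = ∑ j ∈ Finset.range (n + 1), γ ^ j * G j s := fun s => rfl
  have htrans : ∀ (j : ℕ) (w : S → ℝ) (s : S),
      ((Pᵀ) ^ j).mulVec w s = ∑ s', (P ^ j) s' s * w s' := by
    intro j w s
    rw [← Matrix.transpose_pow]
    simp [Matrix.mulVec, dotProduct, Matrix.transpose_apply]
  have hWe : ∀ s, d s * truncEmph γ P d i n s = W s := by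
    intro s
    unfold truncEmph
    rw [hWs, Finset.mul_sum]
    apply Finset.sum_congr rfl
    intro j _
    have hterm : ((Matrix.diagonal fun s => (d s)⁻¹) * (Pᵀ) ^ j * Matrix.diagonal d).mulVec i s
        = (d s)⁻¹ * G j s := by
      rw [← Matrix.mulVec_mulVec, ← Matrix.mulVec_mulVec, diag_mulVec' d i,
        diag_mulVec' (fun s => (d s)⁻¹)]
      beta_reduce
      rw [htrans j (fun t => d t * i t) s, hGs]
    rw [hterm, show d s * (γ ^ j * ((d s)⁻¹ * G j s)) = (d s * (d s)⁻¹) * (γ ^ j * G j s) from by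
      ring, mul_inv_cancel₀ (hdne s), one_mul]
  have hW0 : ∀ s, 0 < W s := by
    intro s
    rw [hWs]
    apply Finset.sum_pos'
    · intro j _; exact mul_nonneg (pow_nonneg hγ0 j) (hG0 j s)
    · exact ⟨0, Finset.mem_range.mpr (Nat.succ_pos n), by
        rw [pow_zero, one_mul, hG0eq]; exact hdi0 s⟩
  have hWkey : ∀ s, γ * (∑ s', P s' s * W s') ≤ W s := by
    intro s
    have h1 : γ * (∑ s', P s' s * W s') = ∑ j ∈ Finset.range (n + 1), γ ^ (j + 1) * G (j + 1) s := by
      calc γ * ∑ s', P s' s * W s'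
          = γ * ∑ s', ∑ j ∈ Finset.range (n + 1), P s' s * (γ ^ j * G j s') := by
            congr 1
            exact Finset.sum_congr rfl fun s' _ => by rw [hWs, Finset.mul_sum]
        _ = γ * ∑ j ∈ Finset.range (n + 1), ∑ s', P s' s * (γ ^ j * G j s') := by
            rw [Finset.sum_comm]
        _ = ∑ j ∈ Finset.range (n + 1), γ ^ (j + 1) * G (j + 1) s := by
            rw [Finset.mul_sum]
            apply Finset.sum_congr rfl
            intro j _
            rw [hGsucc j s, Finset.mul_sum, Finset.mul_sum]
            exact Finset.sum_congr rfl fun s' _ => by ring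
    have h2 : ∑ j ∈ Finset.range (n + 1), γ ^ (j + 1) * G (j + 1) s
        = (W s + γ ^ (n + 1) * G (n + 1) s) - G 0 s := by
      have e1 : ∑ j ∈ Finset.range (n + 2), γ ^ j * G j s
          = (∑ j ∈ Finset.range (n + 1), γ ^ j * G j s) + γ ^ (n + 1) * G (n + 1) s :=
        Finset.sum_range_succ _ (n + 1)
      have e2 : ∑ j ∈ Finset.range (n + 2), γ ^ j * G j s
          = (∑ j ∈ Finset.range (n + 1), γ ^ (j + 1) * G (j + 1) s) + γ ^ 0 * G 0 s :=
        Finset.sum_range_succ' _ (n + 1)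
      rw [pow_zero, one_mul] at e2
      rw [hWs]
      linarith
    have h3 : γ ^ (n + 1) * G (n + 1) s ≤ G 0 s := by
      rw [hG0eq]
      calc γ ^ (n + 1) * G (n + 1) s ≤ γ ^ (n + 1) * ∑ s', d s' * i s' :=
            mul_le_mul_of_nonneg_left (hGle _ s) (pow_nonneg hγ0 _)
        _ ≤ idmin := hstar.le
        _ ≤ i s * d s := hidminle s
        _ = d s * i s := mul_comm _ _
    rw [h1, h2]
    linarith
  -- ==================== projection is nonexpansive ====================
  have hProj' : ∀ v : S → ℝ, (∃ c, Proj v = X.mulVec c) ∧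
      ∀ c : Fin K → ℝ, ∑ s, W s * (Proj v s - v s) ^ 2 ≤ ∑ s, W s * (X.mulVec c s - v s) ^ 2 := by
    intro v
    obtain ⟨h1, h2⟩ := hProj v
    exact ⟨h1, fun c => by simpa only [hWe] using h2 c⟩
  have horth : ∀ (v : S → ℝ) (c : Fin K → ℝ),
      ∑ s, W s * ((Proj v s - v s) * X.mulVec c s) = 0 := by
    intro v c
    obtain ⟨⟨c₀, hc₀⟩, hmin⟩ := hProj' v
    apply quad_zero' (b := ∑ s, W s * (X.mulVec c s) ^ 2)
      (Finset.sum_nonneg fun s _ => mul_nonneg (hW0 s).le (sq_nonneg _))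
    intro t
    have h := hmin (c₀ + t • c)
    have hXc : ∀ s, X.mulVec (c₀ + t • c) s = Proj v s + t * X.mulVec c s := by
      intro s
      rw [Matrix.mulVec_add, Matrix.mulVec_smul, hc₀]
      simp
    have hexp : ∑ s, W s * (X.mulVec (c₀ + t • c) s - v s) ^ 2
        = ∑ s, W s * (Proj v s - v s) ^ 2 +
          (2 * t * ∑ s, W s * ((Proj v s - v s) * X.mulVec c s) +
            t ^ 2 * ∑ s, W s * (X.mulVec c s) ^ 2) := by
      calc ∑ s, W s * (X.mulVec (c₀ + t • c) s - v s) ^ 2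
          = ∑ s, (W s * (Proj v s - v s) ^ 2 +
              (2 * t * (W s * ((Proj v s - v s) * X.mulVec c s)) +
                t ^ 2 * (W s * (X.mulVec c s) ^ 2))) :=
            Finset.sum_congr rfl fun s _ => by rw [hXc s]; ring
        _ = _ := by
            rw [Finset.sum_add_distrib, Finset.sum_add_distrib,
              ← Finset.mul_sum, ← Finset.mul_sum]
    rw [hexp] at h
    linarith
  have hnonexp : ∀ a b : S → ℝ,
      ∑ s, W s * (Proj a s - Proj b s) ^ 2 ≤ ∑ s, W s * (a s - b s) ^ 2 := by
    intro a b
    obtain ⟨ca, hca⟩ := (hProj' a).1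
    obtain ⟨cb, hcb⟩ := (hProj' b).1
    have hg : ∀ s, X.mulVec (ca - cb) s = Proj a s - Proj b s := by
      intro s
      rw [Matrix.mulVec_sub, hca, hcb]
      simp
    have h1 := horth a (ca - cb)
    have h2 := horth b (ca - cb)
    simp only [hg] at h1 h2
    have hkey : ∑ s, W s * (Proj a s - Proj b s) ^ 2
        = ∑ s, W s * ((a s - b s) * (Proj a s - Proj b s)) := by
      have hsum : ∑ s, W s * (Proj a s - Proj b s) ^ 2
          - ∑ s, W s * ((a s - b s) * (Proj a s - Proj b s))
          = (∑ s, W s * ((Proj a s - a s) * (Proj a s - Proj b s)))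
            - ∑ s, W s * ((Proj b s - b s) * (Proj a s - Proj b s)) := by
        rw [← Finset.sum_sub_distrib, ← Finset.sum_sub_distrib]
        exact Finset.sum_congr rfl fun s _ => by ring
      rw [h1, h2] at hsum
      linarith
    have hWhalf : ∀ s, Real.sqrt (W s) * Real.sqrt (W s) = W s :=
      fun s => Real.mul_self_sqrt (hW0 s).le
    have hcs := Finset.sum_mul_sq_le_sq_mul_sq Finset.univ
      (fun s => Real.sqrt (W s) * (a s - b s))
      (fun s => Real.sqrt (W s) * (Proj a s - Proj b s))
    have e1 : ∑ s, (Real.sqrt (W s) * (a s - b s)) * (Real.sqrt (W s) * (Proj a s - Proj b s))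
        = ∑ s, W s * ((a s - b s) * (Proj a s - Proj b s)) :=
      Finset.sum_congr rfl fun s _ => by
        rw [show (Real.sqrt (W s) * (a s - b s)) * (Real.sqrt (W s) * (Proj a s - Proj b s))
          = (Real.sqrt (W s) * Real.sqrt (W s)) * ((a s - b s) * (Proj a s - Proj b s)) from by
            ring, hWhalf s]
    have e2 : ∑ s, (Real.sqrt (W s) * (a s - b s)) ^ 2 = ∑ s, W s * (a s - b s) ^ 2 :=
      Finset.sum_congr rfl fun s _ => by rw [mul_pow, Real.sq_sqrt (hW0 s).le]
    have e3 : ∑ s, (Real.sqrt (W s) * (Proj a s - Proj b s)) ^ 2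
        = ∑ s, W s * (Proj a s - Proj b s) ^ 2 :=
      Finset.sum_congr rfl fun s _ => by rw [mul_pow, Real.sq_sqrt (hW0 s).le]
    rw [e1, e2, e3] at hcs
    rw [← hkey] at hcs
    have hg0 : 0 ≤ ∑ s, W s * (Proj a s - Proj b s) ^ 2 :=
      Finset.sum_nonneg fun s _ => mul_nonneg (hW0 s).le (sq_nonneg _)
    rcases eq_or_lt_of_le hg0 with hz | hpos
    · rw [← hz]
      exact Finset.sum_nonneg fun s _ => mul_nonneg (hW0 s).le (sq_nonneg _)
    · nlinarith [hcs, hpos]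
  -- ==================== the Bellman operator is a √γ-contraction ====================
  have hjensen : ∀ (u : S → ℝ) (s : S), (P.mulVec u s) ^ 2 ≤ ∑ s', P s s' * (u s') ^ 2 := by
    intro u s
    have hcs := Finset.sum_mul_sq_le_sq_mul_sq Finset.univ
      (fun s' => Real.sqrt (P s s')) (fun s' => Real.sqrt (P s s') * u s')
    have e1 : ∑ s', Real.sqrt (P s s') * (Real.sqrt (P s s') * u s') = P.mulVec u s := by
      rw [show P.mulVec u s = ∑ s', P s s' * u s' from rfl]
      exact Finset.sum_congr rfl fun s' _ => by
        rw [← mul_assoc, Real.mul_self_sqrt (hP0 s s')]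
    have e2 : ∑ s', (Real.sqrt (P s s')) ^ 2 = 1 := by
      rw [← hP1 s]
      exact Finset.sum_congr rfl fun s' _ => Real.sq_sqrt (hP0 s s')
    have e3 : ∑ s', (Real.sqrt (P s s') * u s') ^ 2 = ∑ s', P s s' * (u s') ^ 2 :=
      Finset.sum_congr rfl fun s' _ => by rw [mul_pow, Real.sq_sqrt (hP0 s s')]
    rw [e1, e2, e3, one_mul] at hcs
    exact hcs
  have hbell : ∀ u : S → ℝ, ∑ s, W s * (γ * P.mulVec u s) ^ 2 ≤ γ * ∑ s, W s * (u s) ^ 2 := by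
    intro u
    calc ∑ s, W s * (γ * P.mulVec u s) ^ 2
        = γ ^ 2 * ∑ s, W s * (P.mulVec u s) ^ 2 := by
          rw [Finset.mul_sum]
          exact Finset.sum_congr rfl fun s _ => by ring
      _ ≤ γ ^ 2 * ∑ s, W s * ∑ s', P s s' * (u s') ^ 2 := by
          apply mul_le_mul_of_nonneg_left _ (sq_nonneg γ)
          exact Finset.sum_le_sum fun s _ =>
            mul_le_mul_of_nonneg_left (hjensen u s) (hW0 s).le
      _ = γ * ∑ s', (u s') ^ 2 * (γ * ∑ s, P s s' * W s) := by
          simp only [Finset.mul_sum]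
          rw [Finset.sum_comm]
          exact Finset.sum_congr rfl fun s' _ => Finset.sum_congr rfl fun s _ => by ring
      _ ≤ γ * ∑ s', (u s') ^ 2 * W s' := by
          apply mul_le_mul_of_nonneg_left _ hγ0
          exact Finset.sum_le_sum fun s' _ =>
            mul_le_mul_of_nonneg_left (hWkey s') (sq_nonneg _)
      _ = γ * ∑ s, W s * (u s) ^ 2 := by
          congr 1
          exact Finset.sum_congr rfl fun s _ => mul_comm _ _
  -- ==================== assembly ====================
  intro v₁ v₂
  simp only [hWe]
  have hTd : ∀ s, (rπ s + γ * P.mulVec v₁ s) - (rπ s + γ * P.mulVec v₂ s)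
      = γ * P.mulVec (fun t => v₁ t - v₂ t) s := by
    intro s
    have hsub : P.mulVec (fun t => v₁ t - v₂ t) s = P.mulVec v₁ s - P.mulVec v₂ s := by
      simp [Matrix.mulVec, dotProduct, mul_sub, Finset.sum_sub_distrib]
    rw [hsub]; ring
  have step1 : ∑ s, W s * (Proj (fun s => rπ s + γ * P.mulVec v₁ s) s
        - Proj (fun s => rπ s + γ * P.mulVec v₂ s) s) ^ 2
      ≤ ∑ s, W s * ((rπ s + γ * P.mulVec v₁ s) - (rπ s + γ * P.mulVec v₂ s)) ^ 2 :=
    hnonexp _ _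
  have step2 : ∑ s, W s * ((rπ s + γ * P.mulVec v₁ s) - (rπ s + γ * P.mulVec v₂ s)) ^ 2
      = ∑ s, W s * (γ * P.mulVec (fun t => v₁ t - v₂ t) s) ^ 2 :=
    Finset.sum_congr rfl fun s _ => by rw [hTd s]
  have step3 := hbell (fun t => v₁ t - v₂ t)
  calc Real.sqrt (∑ s, W s * (Proj (fun s => rπ s + γ * P.mulVec v₁ s) s
        - Proj (fun s => rπ s + γ * P.mulVec v₂ s) s) ^ 2)
      ≤ Real.sqrt (γ * ∑ s, W s * (v₁ s - v₂ s) ^ 2) := by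
        apply Real.sqrt_le_sqrt
        calc ∑ s, W s * (Proj (fun s => rπ s + γ * P.mulVec v₁ s) s
              - Proj (fun s => rπ s + γ * P.mulVec v₂ s) s) ^ 2
            ≤ ∑ s, W s * (γ * P.mulVec (fun t => v₁ t - v₂ t) s) ^ 2 := by
              rw [← step2]; exact step1
          _ ≤ γ * ∑ s, W s * (v₁ s - v₂ s) ^ 2 := step3
    _ = Real.sqrt γ * Real.sqrt (∑ s, W s * (v₁ s - v₂ s) ^ 2) := Real.sqrt_mul hγ0 _

end
end
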